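/- Fix a > 0 and η > 0, and define on (0, ∞) the function L(ξ) = ∫_0^∞ t^a exp( −t − η √(2t/ξ) ) dt (the slowly varying component of the generalized double Pareto hyperprior). Then lim_{ξ→∞} L(ξ) = Γ(a+1) ∈ (0, ∞), and L is slowly varying, i.e., for every α > 0, lim_{x→∞} L(αx)/L(x) = 1; in particular there exist c₀ > 0 and t₀ such that L(t) ≥ c₀ for all t ≥ t₀, so (C1) holds for the generalized double Pareto prior. -/

import Mathlib

open Filter MeasureTheory

lemma gdp_key (a η : ℝ) (ha : 0 < a) (hη : 0 < η) :
    Tendsto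
      (fun ξ : ℝ =>
        ∫ t in Set.Ioi (0 : ℝ), t ^ a * Real.exp (-t - η * Real.sqrt (2 * t / ξ)))
      atTop (nhds (Real.Gamma (a + 1))) := by
  have hint : IntegrableOn (fun t : ℝ => t ^ a * Real.exp (-t)) (Set.Ioi 0) := by
    have := Real.GammaIntegral_convergent (s := a + 1) (by linarith)
    simpa [mul_comm, add_sub_cancel_right] using this
  have hΓ : Real.Gamma (a + 1) = ∫ t in Set.Ioi (0 : ℝ), t ^ a * Real.exp (-t) := by
    rw [Real.Gamma_eq_integral (by linarith : (0:ℝ) < a + 1)]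
    simp [add_sub_cancel_right, mul_comm]
  rw [hΓ]
  apply tendsto_integral_filter_of_dominated_convergence
    (fun t : ℝ => t ^ a * Real.exp (-t))
  · filter_upwards with ξ
    apply Measurable.aestronglyMeasurable
    fun_prop
  · filter_upwards with ξ
    filter_upwards [self_mem_ae_restrict measurableSet_Ioi] with t ht
    have h0 : 0 ≤ t := le_of_lt ht
    have h1 : (0:ℝ) ≤ t ^ a := Real.rpow_nonneg h0 a
    have h2 : Real.exp (-t - η * Real.sqrt (2 * t / ξ)) ≤ Real.exp (-t) := by
      apply Real.exp_le_exp.2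
      have : 0 ≤ η * Real.sqrt (2 * t / ξ) :=
        mul_nonneg hη.le (Real.sqrt_nonneg _)
      linarith
    rw [Real.norm_eq_abs, abs_of_nonneg (mul_nonneg h1 (Real.exp_pos _).le)]
    exact mul_le_mul_of_nonneg_left h2 h1
  · exact hint
  · filter_upwards [self_mem_ae_restrict measurableSet_Ioi] with t ht
    have h1 : Tendsto (fun ξ : ℝ => 2 * t / ξ) atTop (nhds 0) := by
      simpa [div_eq_mul_inv] using (tendsto_inv_atTop_zero (𝕜 := ℝ)).const_mul (2 * t)
    have h2 : Tendsto (fun ξ : ℝ => -t - η * Real.sqrt (2 * t / ξ)) atTop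
        (nhds (-t)) := by
      have := ((Real.continuous_sqrt.tendsto 0).comp h1).const_mul η
      have h3 : Tendsto (fun ξ : ℝ => -t - η * Real.sqrt (2 * t / ξ)) atTop
          (nhds (-t - η * Real.sqrt 0)) := tendsto_const_nhds.sub this
      simpa using h3
    simpa using ((Real.continuous_exp.tendsto _).comp h2).const_mul (t ^ a)

/-- **Condition (C1) for the generalized double Pareto hyperprior.**
For `a > 0`, `η > 0`, the function `L(ξ) = ∫₀^∞ t^a exp(-t - η √(2t/ξ)) dt`
tends to `Γ(a+1) ∈ (0,∞)` as `ξ → ∞`, is slowly varying, and in particular is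
bounded below by some `c₀ > 0` eventually. -/
theorem gdp_slowly_varying (a η : ℝ) (ha : 0 < a) (hη : 0 < η) :
    Tendsto
      (fun ξ : ℝ =>
        ∫ t in Set.Ioi (0 : ℝ), t ^ a * Real.exp (-t - η * Real.sqrt (2 * t / ξ)))
      atTop (nhds (Real.Gamma (a + 1))) ∧
    0 < Real.Gamma (a + 1) ∧
    (∀ α : ℝ, 0 < α →
      Tendsto
        (fun x : ℝ =>
          (∫ t in Set.Ioi (0 : ℝ),
              t ^ a * Real.exp (-t - η * Real.sqrt (2 * t / (α * x)))) /
            ∫ t in Set.Ioi (0 : ℝ), t ^ a * Real.exp (-t - η * Real.sqrt (2 * t / x)))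
        atTop (nhds 1)) ∧
    ∃ c₀ : ℝ, 0 < c₀ ∧ ∃ t₀ : ℝ, ∀ ξ : ℝ, t₀ ≤ ξ →
      c₀ ≤ ∫ t in Set.Ioi (0 : ℝ), t ^ a * Real.exp (-t - η * Real.sqrt (2 * t / ξ)) := by
  have hkey := gdp_key a η ha hη
  have hΓpos : 0 < Real.Gamma (a + 1) := Real.Gamma_pos_of_pos (by linarith)
  refine ⟨hkey, hΓpos, ?_, ?_⟩
  · intro α hα
    have hmul : Tendsto (fun x : ℝ => α * x) atTop atTop :=
      Tendsto.const_mul_atTop hα tendsto_id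
    have h1 : Tendsto (fun x : ℝ =>
        ∫ t in Set.Ioi (0 : ℝ), t ^ a * Real.exp (-t - η * Real.sqrt (2 * t / (α * x))))
        atTop (nhds (Real.Gamma (a + 1))) := hkey.comp hmul
    have := h1.div hkey hΓpos.ne'
    rw [div_self hΓpos.ne'] at this
    exact this
  · have : ∀ᶠ ξ in atTop, Real.Gamma (a + 1) / 2 ≤
        ∫ t in Set.Ioi (0 : ℝ), t ^ a * Real.exp (-t - η * Real.sqrt (2 * t / ξ)) :=
      hkey.eventually (eventually_ge_nhds (by linarith))
    obtain ⟨t₀, ht₀⟩ := eventually_atTop.1 this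
    exact ⟨Real.Gamma (a + 1) / 2, by linarith, t₀, ht₀⟩
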